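/- Let (M_k)_{k≥1} be invertible real n×n matrices, (Ω_k)_{k≥0} real symmetric positive semi-definite n×n matrices, and P_0 a real symmetric positive semi-definite n×n matrix. Define P_{k+1} = M_{k+1}(I + P_kΩ_k)⁻¹P_kM_{k+1}ᵀ and M_{k:0} = M_k⋯M_1. For a real symmetric n×n matrix A, write σ_i(A) for its i-th largest eigenvalue (σ₁ ≥ σ₂ ≥ ⋯ ≥ σ_n). Then for every k ≥ 0 and every 1 ≤ i ≤ n, σ_i(P_k) ≤ σ₁(P_0)·σ_i(M_{k:0}M_{k:0}ᵀ). -/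

import Mathlib

open Matrix

/-- `Mres M l j` is the resolvent `M_{(l+j):l} = M_{l+j} ⋯ M_{l+1}`, so that
`M_{k:0} = Mres M 0 k` and `M_{0:0} = 1`. -/
def Mres {n : ℕ} (M : ℕ → Matrix (Fin n) (Fin n) ℝ) (l : ℕ) :
    ℕ → Matrix (Fin n) (Fin n) ℝ
  | 0 => 1
  | j + 1 => M (l + j + 1) * Mres M l j

/-- `eigDesc A i` is the `i`-th largest eigenvalue of a real symmetric matrix `A`
(with `i : Fin n` zero-based, so `eigDesc A 0` is the largest eigenvalue);
it is defined as `0` if `A` is not Hermitian. -/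
noncomputable def eigDesc {n : ℕ} (A : Matrix (Fin n) (Fin n) ℝ) (i : Fin n) : ℝ :=
  if hA : A.IsHermitian then (hA.eigenvalues ∘ Tuple.sort hA.eigenvalues) i.rev else 0

namespace KFaux

variable {n : ℕ}

lemma coord_dot (A : Matrix (Fin n) (Fin n) ℝ) (hA : A.IsHermitian) (x : Fin n → ℝ) :
    x ⬝ᵥ (A *ᵥ x)
      = ∑ j, hA.eigenvalues j
          * ((star (hA.eigenvectorUnitary : Matrix (Fin n) (Fin n) ℝ) *ᵥ x) j) ^ 2 := by
  set U : Matrix (Fin n) (Fin n) ℝ := (hA.eigenvectorUnitary : Matrix (Fin n) (Fin n) ℝ) with hU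
  set y : Fin n → ℝ := star U *ᵥ x with hy
  have hspec := hA.spectral_theorem
  calc x ⬝ᵥ (A *ᵥ x)
      = x ⬝ᵥ ((U * diagonal (RCLike.ofReal ∘ hA.eigenvalues) * star U) *ᵥ x) := by
        exact congrArg (fun B => x ⬝ᵥ (B *ᵥ x)) hspec
    _ = y ⬝ᵥ (diagonal (RCLike.ofReal ∘ hA.eigenvalues) *ᵥ y) := by
        rw [← mulVec_mulVec, ← mulVec_mulVec, dotProduct_mulVec, ← mulVec_transpose,
          hy, star_eq_conjTranspose, conjTranspose_eq_transpose_of_trivial]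
    _ = ∑ j, hA.eigenvalues j * (y j) ^ 2 := by
        simp [dotProduct, mulVec_diagonal]
        exact Finset.sum_congr rfl fun j _ => by ring

lemma coord_norm (A : Matrix (Fin n) (Fin n) ℝ) (hA : A.IsHermitian) (x : Fin n → ℝ) :
    x ⬝ᵥ x
      = ∑ j, ((star (hA.eigenvectorUnitary : Matrix (Fin n) (Fin n) ℝ) *ᵥ x) j) ^ 2 := by
  set U : Matrix (Fin n) (Fin n) ℝ := (hA.eigenvectorUnitary : Matrix (Fin n) (Fin n) ℝ) with hU
  have h1 : U * star U = 1 := mem_unitaryGroup_iff.mp hA.eigenvectorUnitary.2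
  have hsU : star U = Uᵀ := by
    rw [star_eq_conjTranspose, conjTranspose_eq_transpose_of_trivial]
  have : (star U *ᵥ x) ⬝ᵥ (star U *ᵥ x) = x ⬝ᵥ x := by
    rw [hsU, dotProduct_mulVec, ← mulVec_transpose, transpose_transpose, mulVec_mulVec,
      ← hsU, h1, one_mulVec]
  rw [← this, dotProduct]
  exact Finset.sum_congr rfl fun j _ => by ring

/-- span of eigenvector columns indexed by `S`, with dimension bound and coordinate vanishing. -/
lemma exists_subspace (A : Matrix (Fin n) (Fin n) ℝ) (hA : A.IsHermitian) (S : Finset (Fin n)) :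
    ∃ V : Submodule ℝ (Fin n → ℝ), S.card ≤ Module.finrank ℝ V ∧
      ∀ x ∈ V, ∀ j ∉ S,
        (star (hA.eigenvectorUnitary : Matrix (Fin n) (Fin n) ℝ) *ᵥ x) j = 0 := by
  classical
  set U : Matrix (Fin n) (Fin n) ℝ := (hA.eigenvectorUnitary : Matrix (Fin n) (Fin n) ℝ) with hU
  set bcol : Fin n → (Fin n → ℝ) := fun j i0 => U i0 j with hbcol
  have fact1 : ∀ j, star U *ᵥ bcol j = Pi.single j 1 := by
    intro j
    have : bcol j = ⇑(hA.eigenvectorBasis j) := by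
      funext i0; exact hA.eigenvectorUnitary_apply i0 j
    rw [this]
    exact hA.star_eigenvectorUnitary_mulVec j
  have li : LinearIndependent ℝ bcol := by
    apply LinearIndependent.of_comp (Matrix.mulVecLin (star U))
    have h := (Pi.basisFun ℝ (Fin n)).linearIndependent
    have e : ⇑(Pi.basisFun ℝ (Fin n)) = (Matrix.mulVecLin (star U)) ∘ bcol := by
      funext j
      simp [Matrix.mulVecLin_apply, fact1 j]
    rwa [e] at h
  set v : {j // j ∈ S} → (Fin n → ℝ) := fun j => bcol j with hv
  have liv : LinearIndependent ℝ v := li.comp Subtype.val Subtype.val_injective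
  refine ⟨Submodule.span ℝ (Set.range v), ?_, ?_⟩
  · rw [finrank_span_eq_card liv]
    simp
  · intro x hx j hj
    set φ : (Fin n → ℝ) →ₗ[ℝ] ℝ := (LinearMap.proj j).comp (Matrix.mulVecLin (star U)) with hφ
    have hker : Submodule.span ℝ (Set.range v) ≤ LinearMap.ker φ := by
      rw [Submodule.span_le]
      rintro _ ⟨⟨k, hk⟩, rfl⟩
      simp only [SetLike.mem_coe, LinearMap.mem_ker, hφ, LinearMap.comp_apply,
        Matrix.mulVecLin_apply, LinearMap.proj_apply, hv]
      rw [fact1 k]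
      exact Pi.single_eq_of_ne (fun h => hj (by rw [h]; exact hk)) 1
    have := hker hx
    simpa [hφ, Matrix.mulVecLin_apply] using this

lemma card_filter_ge (f : Fin n → ℝ) (i : Fin n) :
    i.val + 1 ≤ (Finset.univ.filter fun j => (f ∘ Tuple.sort f) i.rev ≤ f j).card := by
  classical
  have h := Finset.card_le_card_of_injOn
    (s := Finset.Ici i.rev)
    (t := Finset.univ.filter fun j => (f ∘ Tuple.sort f) i.rev ≤ f j)
    (fun j' => Tuple.sort f j')
    (fun j' hj' => by
      simp only [Finset.mem_coe, Finset.mem_filter, Finset.mem_univ, true_and]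
      exact Tuple.monotone_sort f (Finset.mem_Ici.mp hj'))
    ((Tuple.sort f).injective.injOn)
  have hc : (Finset.Ici i.rev).card = n - i.rev.val := Fin.card_Ici i.rev
  have h1 : i.rev.val = n - (i.val + 1) := Fin.val_rev i
  have h2 := i.isLt
  omega

lemma card_filter_le (f : Fin n → ℝ) (i : Fin n) :
    n - i.val ≤ (Finset.univ.filter fun j => f j ≤ (f ∘ Tuple.sort f) i.rev).card := by
  classical
  have h := Finset.card_le_card_of_injOn
    (s := Finset.Iic i.rev)
    (t := Finset.univ.filter fun j => f j ≤ (f ∘ Tuple.sort f) i.rev)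
    (fun j' => Tuple.sort f j')
    (fun j' hj' => by
      simp only [Finset.mem_coe, Finset.mem_filter, Finset.mem_univ, true_and]
      exact Tuple.monotone_sort f (Finset.mem_Iic.mp hj'))
    ((Tuple.sort f).injective.injOn)
  have hc : (Finset.Iic i.rev).card = i.rev.val + 1 := Fin.card_Iic i.rev
  have h1 : i.rev.val = n - (i.val + 1) := Fin.val_rev i
  have h2 := i.isLt
  omega

/-- Courant–Fischer-style comparison: if `xᵀAx ≤ c·xᵀBx` for all `x`, then the `i`-th largest
eigenvalue of `A` is at most `c` times that of `B`. -/
lemma key (A B : Matrix (Fin n) (Fin n) ℝ)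
    (hA : A.IsHermitian) (hB : B.IsHermitian) {c : ℝ} (hc : 0 ≤ c)
    (h : ∀ x : Fin n → ℝ, x ⬝ᵥ (A *ᵥ x) ≤ c * (x ⬝ᵥ (B *ᵥ x)))
    (i : Fin n) : eigDesc A i ≤ c * eigDesc B i := by
  classical
  rw [eigDesc, eigDesc, dif_pos hA, dif_pos hB]
  set fA := hA.eigenvalues with hfA
  set fB := hB.eigenvalues with hfB
  set t := (fA ∘ Tuple.sort fA) i.rev with ht
  set s := (fB ∘ Tuple.sort fB) i.rev with hs
  set SA : Finset (Fin n) := Finset.univ.filter fun j => t ≤ fA j with hSA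
  set SB : Finset (Fin n) := Finset.univ.filter fun j => fB j ≤ s with hSB
  obtain ⟨VA, hVAdim, hVAvan⟩ := exists_subspace A hA SA
  obtain ⟨VB, hVBdim, hVBvan⟩ := exists_subspace B hB SB
  have hcardA : i.val + 1 ≤ SA.card := card_filter_ge fA i
  have hcardB : n - i.val ≤ SB.card := card_filter_le fB i
  have hfin := Submodule.finrank_sup_add_finrank_inf_eq VA VB
  have hsup : Module.finrank ℝ ↥(VA ⊔ VB) ≤ n := by
    have h1 := Submodule.finrank_le (VA ⊔ VB)
    rwa [Module.finrank_fin_fun] at h1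
  have hii := i.isLt
  have hinf : 0 < Module.finrank ℝ ↥(VA ⊓ VB) := by omega
  have hbot : VA ⊓ VB ≠ ⊥ := by
    intro hb
    rw [hb, finrank_bot] at hinf
    exact lt_irrefl 0 hinf
  obtain ⟨x, hx, hx0⟩ := Submodule.exists_mem_ne_zero_of_ne_bot hbot
  have hxA : x ∈ VA := (Submodule.mem_inf.mp hx).1
  have hxB : x ∈ VB := (Submodule.mem_inf.mp hx).2
  have lbA : t * (x ⬝ᵥ x) ≤ x ⬝ᵥ (A *ᵥ x) := by
    rw [coord_dot A hA x, coord_norm A hA x, Finset.mul_sum]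
    refine Finset.sum_le_sum fun j _ => ?_
    by_cases hy : (star (hA.eigenvectorUnitary : Matrix (Fin n) (Fin n) ℝ) *ᵥ x) j = 0
    · rw [hy]; simp
    · have hjS : j ∈ SA := by
        by_contra hjS
        exact hy (hVAvan x hxA j hjS)
      have : t ≤ fA j := (Finset.mem_filter.mp hjS).2
      exact mul_le_mul_of_nonneg_right this (sq_nonneg _)
  have ubB : x ⬝ᵥ (B *ᵥ x) ≤ s * (x ⬝ᵥ x) := by
    rw [coord_dot B hB x, coord_norm B hB x, Finset.mul_sum]
    refine Finset.sum_le_sum fun j _ => ?_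
    by_cases hy : (star (hB.eigenvectorUnitary : Matrix (Fin n) (Fin n) ℝ) *ᵥ x) j = 0
    · rw [hy]; simp
    · have hjS : j ∈ SB := by
        by_contra hjS
        exact hy (hVBvan x hxB j hjS)
      have : fB j ≤ s := (Finset.mem_filter.mp hjS).2
      exact mul_le_mul_of_nonneg_right this (sq_nonneg _)
  have hxx : 0 < x ⬝ᵥ x := by
    have := Matrix.dotProduct_star_self_pos_iff (v := x) |>.mpr hx0
    simpa using this
  have chain : t * (x ⬝ᵥ x) ≤ (c * s) * (x ⬝ᵥ x) := by
    calc t * (x ⬝ᵥ x) ≤ x ⬝ᵥ (A *ᵥ x) := lbA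
      _ ≤ c * (x ⬝ᵥ (B *ᵥ x)) := h x
      _ ≤ c * (s * (x ⬝ᵥ x)) := mul_le_mul_of_nonneg_left ubB hc
      _ = (c * s) * (x ⬝ᵥ x) := by ring
  exact le_of_mul_le_mul_right chain hxx

lemma quad_le_top (A : Matrix (Fin n) (Fin n) ℝ) (hA : A.IsHermitian) (hn : 0 < n)
    (x : Fin n → ℝ) :
    x ⬝ᵥ (A *ᵥ x) ≤ eigDesc A ⟨0, hn⟩ * (x ⬝ᵥ x) := by
  rw [eigDesc, dif_pos hA, coord_dot A hA x, coord_norm A hA x, Finset.mul_sum]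
  refine Finset.sum_le_sum fun j _ => ?_
  refine mul_le_mul_of_nonneg_right ?_ (sq_nonneg _)
  set σ := Tuple.sort hA.eigenvalues with hσ
  have : hA.eigenvalues j = (hA.eigenvalues ∘ σ) (σ.symm j) := by simp
  rw [this]
  refine Tuple.monotone_sort hA.eigenvalues ?_
  rw [Fin.le_def]
  have h1 : ((⟨0, hn⟩ : Fin n).rev : ℕ) = n - 1 := by
    rw [Fin.val_rev]
  have h2 := (σ.symm j).isLt
  omega

open scoped MatrixOrder Matrix.Norms.L2Operator in
lemma riccati_step {P Q : Matrix (Fin n) (Fin n) ℝ} (hP : P.PosSemidef) (hQ : Q.PosSemidef) :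
    ((1 + P * Q)⁻¹ * P).PosSemidef ∧ (P - (1 + P * Q)⁻¹ * P).PosSemidef := by
  classical
  set R := CFC.sqrt P with hRdef
  have hR : R.PosSemidef := (CFC.sqrt_nonneg P).posSemidef
  have hRR : R * R = P := CFC.sqrt_mul_sqrt_self P hP.nonneg
  have hRH : Rᴴ = R := hR.1
  have hC : (R * Q * R).PosSemidef := by
    have := hQ.mul_mul_conjTranspose_same R
    rwa [hRH] at this
  have hD : (1 + R * Q * R).PosDef := by
    have := Matrix.PosDef.add_posSemidef (Matrix.PosDef.one (n := Fin n) (R := ℝ)) hC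
    exact this
  have hDdet : IsUnit (1 + R * Q * R).det := isUnit_iff_ne_zero.mpr hD.det_pos.ne'
  have hPQeq : 1 + P * Q = 1 + R * (R * Q) := by rw [← hRR, Matrix.mul_assoc]
  have hPQdet : IsUnit (1 + P * Q).det := by
    rw [hPQeq, Matrix.det_one_add_mul_comm]
    exact hDdet
  set D := 1 + R * Q * R with hDdef
  have key : (1 + P * Q)⁻¹ * P = R * D⁻¹ * R := by
    have h2 : (1 + P * Q) * R = R * D := by
      rw [← hRR, hDdef]
      noncomm_ring
    have h1 : (1 + P * Q) * (R * D⁻¹ * R) = P := by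
      calc (1 + P * Q) * (R * D⁻¹ * R) = ((1 + P * Q) * R) * (D⁻¹ * R) := by
            rw [Matrix.mul_assoc, Matrix.mul_assoc]
        _ = R * (D * D⁻¹) * R := by rw [h2]; rw [Matrix.mul_assoc, Matrix.mul_assoc,
              Matrix.mul_assoc]
        _ = R * R := by rw [Matrix.mul_nonsing_inv _ hDdet, Matrix.mul_one]
        _ = P := hRR
    calc (1 + P * Q)⁻¹ * P = (1 + P * Q)⁻¹ * ((1 + P * Q) * (R * D⁻¹ * R)) := by rw [h1]
      _ = R * D⁻¹ * R := by
          rw [← Matrix.mul_assoc, Matrix.nonsing_inv_mul _ hPQdet, Matrix.one_mul]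
  have hDinv : D⁻¹.PosDef := hD.inv
  constructor
  · rw [key]
    have := hDinv.posSemidef.mul_mul_conjTranspose_same R
    rwa [hRH] at this
  · set E := CFC.sqrt D with hEdef
    have hE : E.PosSemidef := (CFC.sqrt_nonneg D).posSemidef
    have hEE : E * E = D := CFC.sqrt_mul_sqrt_self D hD.posSemidef.nonneg
    have hEdet : IsUnit E.det := by
      have : E.det * E.det = D.det := by rw [← Matrix.det_mul, hEE]
      have hDd := hD.det_pos
      refine isUnit_iff_ne_zero.mpr fun h0 => ?_
      rw [h0, mul_zero] at this
      exact hDd.ne this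
    have hEinvH : (E⁻¹)ᴴ = E⁻¹ := (Matrix.IsHermitian.inv hE.1)
    have hone : 1 - D⁻¹ = E⁻¹ * (R * Q * R) * E⁻¹ := by
      have e1 : E⁻¹ * D * E⁻¹ = 1 := by
        calc E⁻¹ * D * E⁻¹ = (E⁻¹ * E) * (E * E⁻¹) := by rw [← hEE]; noncomm_ring
          _ = 1 := by
            rw [Matrix.nonsing_inv_mul _ hEdet, Matrix.mul_nonsing_inv _ hEdet,
              Matrix.one_mul]
      have e2 : E⁻¹ * 1 * E⁻¹ = D⁻¹ := by
        rw [Matrix.mul_one, ← Matrix.mul_inv_rev, hEE]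
      calc 1 - D⁻¹ = E⁻¹ * D * E⁻¹ - E⁻¹ * 1 * E⁻¹ := by rw [e1, e2]
        _ = E⁻¹ * (D - 1) * E⁻¹ := by noncomm_ring
        _ = E⁻¹ * (R * Q * R) * E⁻¹ := by rw [hDdef, add_sub_cancel_left]
    have h1D : (1 - D⁻¹).PosSemidef := by
      rw [hone]
      have := hC.mul_mul_conjTranspose_same E⁻¹
      rwa [hEinvH] at this
    have hfinal : P - (1 + P * Q)⁻¹ * P = R * (1 - D⁻¹) * R := by
      rw [key, ← hRR]
      noncomm_ring
    rw [hfinal]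
    have := h1D.mul_mul_conjTranspose_same R
    rwa [hRH] at this

end KFaux

/-- Rate of convergence of the eigenvalues of the perfect-model Kalman filter
covariance: for every `k` and every `i`, the `i`-th largest eigenvalue of `P_k`
is bounded by `σ₁(P_0) * σ_i(M_{k:0} M_{k:0}ᵀ)`. -/
theorem kf_eigenvalue_decay {n : ℕ}
    (M Ω : ℕ → Matrix (Fin n) (Fin n) ℝ)
    (hM : ∀ k, 1 ≤ k → IsUnit (M k)) (hΩ : ∀ k, (Ω k).PosSemidef)
    (P : ℕ → Matrix (Fin n) (Fin n) ℝ) (hP0 : (P 0).PosSemidef)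
    (hrec : ∀ k, P (k + 1)
      = M (k + 1) * (1 + P k * Ω k)⁻¹ * P k * (M (k + 1))ᵀ) :
    ∀ k, ∀ i : Fin n,
      eigDesc (P k) i
        ≤ eigDesc (P 0) ⟨0, i.pos⟩ * eigDesc (Mres M 0 k * (Mres M 0 k)ᵀ) i := by
  classical
  -- the inductive Loewner-order facts
  have main : ∀ k, (P k).PosSemidef ∧
      (Mres M 0 k * P 0 * (Mres M 0 k)ᵀ - P k).PosSemidef := by
    intro k
    induction k with
    | zero =>
      refine ⟨hP0, ?_⟩
      have : Mres M 0 0 = (1 : Matrix (Fin n) (Fin n) ℝ) := rfl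
      rw [this, transpose_one, Matrix.one_mul, Matrix.mul_one, sub_self]
      exact Matrix.PosSemidef.zero
    | succ k ih =>
      obtain ⟨hPk, hdiff⟩ := ih
      obtain ⟨h1, h2⟩ := KFaux.riccati_step hPk (hΩ k)
      have hMT : (M (k + 1))ᴴ = (M (k + 1))ᵀ :=
        conjTranspose_eq_transpose_of_trivial _
      have hPrec : P (k + 1) = M (k + 1) * ((1 + P k * Ω k)⁻¹ * P k) * (M (k + 1))ᵀ := by
        rw [hrec k, Matrix.mul_assoc (M (k + 1)), ← Matrix.mul_assoc (M (k + 1))]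
      have hPsucc : (P (k + 1)).PosSemidef := by
        rw [hPrec, ← hMT]
        exact h1.mul_mul_conjTranspose_same (M (k + 1))
      refine ⟨hPsucc, ?_⟩
      have hMres : Mres M 0 (k + 1) = M (k + 1) * Mres M 0 k := by
        show M (0 + k + 1) * Mres M 0 k = _
        rw [Nat.zero_add]
      set W := Mres M 0 k with hW
      have hexp : Mres M 0 (k + 1) * P 0 * (Mres M 0 (k + 1))ᵀ - P (k + 1)
          = M (k + 1) * ((W * P 0 * Wᵀ - P k) + (P k - (1 + P k * Ω k)⁻¹ * P k))
            * (M (k + 1))ᵀ := by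
        rw [hMres, hPrec, transpose_mul]
        noncomm_ring
      rw [hexp, ← hMT]
      exact (hdiff.add h2).mul_mul_conjTranspose_same (M (k + 1))
  intro k i
  obtain ⟨hPk, hdiff⟩ := main k
  set W := Mres M 0 k with hW
  set c := eigDesc (P 0) ⟨0, i.pos⟩ with hc
  have hcnn : 0 ≤ c := by
    rw [hc, eigDesc, dif_pos hP0.1]
    exact hP0.eigenvalues_nonneg _
  have hWWH : (W * Wᵀ).IsHermitian := by
    have := isHermitian_mul_conjTranspose_self W
    rwa [conjTranspose_eq_transpose_of_trivial] at this
  have hquad : ∀ x : Fin n → ℝ,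
      x ⬝ᵥ (P k *ᵥ x) ≤ c * (x ⬝ᵥ ((W * Wᵀ) *ᵥ x)) := by
    intro x
    have step1 : x ⬝ᵥ (P k *ᵥ x) ≤ x ⬝ᵥ ((W * P 0 * Wᵀ) *ᵥ x) := by
      have h0 := hdiff.dotProduct_mulVec_nonneg x
      rw [star_trivial, sub_mulVec, dotProduct_sub] at h0
      linarith
    have step2 : x ⬝ᵥ ((W * P 0 * Wᵀ) *ᵥ x)
        = (Wᵀ *ᵥ x) ⬝ᵥ (P 0 *ᵥ (Wᵀ *ᵥ x)) := by
      rw [← mulVec_mulVec, ← mulVec_mulVec, dotProduct_mulVec, ← mulVec_transpose]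
    have step3 : (Wᵀ *ᵥ x) ⬝ᵥ (P 0 *ᵥ (Wᵀ *ᵥ x))
        ≤ c * ((Wᵀ *ᵥ x) ⬝ᵥ (Wᵀ *ᵥ x)) :=
      KFaux.quad_le_top (P 0) hP0.1 i.pos (Wᵀ *ᵥ x)
    have step4 : (Wᵀ *ᵥ x) ⬝ᵥ (Wᵀ *ᵥ x) = x ⬝ᵥ ((W * Wᵀ) *ᵥ x) := by
      rw [← mulVec_mulVec, dotProduct_mulVec, ← mulVec_transpose, transpose_transpose]
      exact dotProduct_comm _ _
    calc x ⬝ᵥ (P k *ᵥ x) ≤ x ⬝ᵥ ((W * P 0 * Wᵀ) *ᵥ x) := step1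
      _ = (Wᵀ *ᵥ x) ⬝ᵥ (P 0 *ᵥ (Wᵀ *ᵥ x)) := step2
      _ ≤ c * ((Wᵀ *ᵥ x) ⬝ᵥ (Wᵀ *ᵥ x)) := step3
      _ = c * (x ⬝ᵥ ((W * Wᵀ) *ᵥ x)) := by rw [step4]
  exact KFaux.key (P k) (W * Wᵀ) hPk.1 hWWH hcnn hquad i
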